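/- (Freedman's inequality) Let (Y_k)_{k≥0} be a real-valued martingale with Y_0 = 0 with respect to a filtration (Σ_k)_{k≥0}, and let X_k = Y_k − Y_{k−1} for k ≥ 1 be its difference sequence. Assume |X_k| ≤ R almost surely for every k ≥ 1, and define the predictable quadratic variation W_k = Σ_{j=1}^k E[X_j² | Σ_{j−1}]. Then for all t ≥ 0 and s² > 0, P( ∃ k ≥ 0 : Y_k ≥ t and W_k ≤ s² ) ≤ exp( −t² / (2(s² + R·t/3)) ). -/

import Mathlib

set_option maxHeartbeats 1000000
open MeasureTheory

lemma freedman_fact_bound (n : ℕ) : 2 * 3 ^ n ≤ Nat.factorial (n + 2) := by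
  induction n with
  | zero => simp [Nat.factorial]
  | succ n ih =>
    have : Nat.factorial (n + 3) = (n + 3) * Nat.factorial (n + 2) := rfl
    rw [this, pow_succ]
    calc 2 * (3 ^ n * 3) = 3 * (2 * 3 ^ n) := by ring
    _ ≤ (n + 3) * Nat.factorial (n + 2) := Nat.mul_le_mul (by omega) ih

lemma freedman_exp_bound {a R x : ℝ} (ha : 0 ≤ a) (hR : 0 < R) (haR : a * R < 3)
    (hx : |x| ≤ R) :
    Real.exp (a * x) ≤ 1 + a * x + a ^ 2 * x ^ 2 / (2 * (1 - a * R / 3)) := by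
  have hq0 : 0 ≤ a * R / 3 := by positivity
  have hq1 : a * R / 3 < 1 := by linarith
  have hsum : Summable (fun n => (a * x) ^ n / (Nat.factorial n : ℝ)) :=
    Real.summable_pow_div_factorial _
  have hsum2 : Summable (fun n => (a * x) ^ (n + 2) / (Nat.factorial (n + 2) : ℝ)) :=
    (summable_nat_add_iff 2).2 hsum
  have hterm : ∀ n : ℕ, (a * x) ^ (n + 2) / (Nat.factorial (n + 2) : ℝ)
      ≤ a ^ 2 * x ^ 2 / 2 * (a * R / 3) ^ n := by
    intro n
    have hfac : (2 * 3 ^ n : ℝ) ≤ (Nat.factorial (n + 2) : ℝ) := by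
      exact_mod_cast freedman_fact_bound n
    have hnum : (a * x) ^ (n + 2) ≤ a ^ 2 * x ^ 2 * (a * R) ^ n := by
      calc (a * x) ^ (n + 2) ≤ |(a * x) ^ (n + 2)| := le_abs_self _
      _ = (a * |x|) ^ (n + 2) := by rw [abs_pow, abs_mul, abs_of_nonneg ha]
      _ = a ^ 2 * (|x| ^ 2 * |x| ^ n) * a ^ n := by ring
      _ ≤ a ^ 2 * (x ^ 2 * R ^ n) * a ^ n := by
          rw [sq_abs]
          have := pow_le_pow_left₀ (abs_nonneg x) hx n
          gcongr
      _ = a ^ 2 * x ^ 2 * (a * R) ^ n := by rw [mul_pow]; ring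
    have h2 : (0:ℝ) < 2 * 3 ^ n := by positivity
    calc (a * x) ^ (n + 2) / (Nat.factorial (n + 2) : ℝ)
        ≤ (a ^ 2 * x ^ 2 * (a * R) ^ n) / (2 * 3 ^ n) := by
          rcases le_or_gt ((a*x)^(n+2)) 0 with h | h
          · exact le_trans (div_nonpos_of_nonpos_of_nonneg h (Nat.cast_nonneg _))
              (by positivity)
          · exact div_le_div₀ (by positivity) hnum h2 hfac
      _ = a ^ 2 * x ^ 2 / 2 * (a * R / 3) ^ n := by rw [div_pow]; ring
  have hgeo : Summable (fun n : ℕ => a ^ 2 * x ^ 2 / 2 * (a * R / 3) ^ n) :=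
    (summable_geometric_of_lt_one hq0 hq1).mul_left _
  have htail : ∑' n : ℕ, (a * x) ^ (n + 2) / (Nat.factorial (n + 2) : ℝ)
      ≤ a ^ 2 * x ^ 2 / (2 * (1 - a * R / 3)) := by
    calc ∑' n : ℕ, (a * x) ^ (n + 2) / (Nat.factorial (n + 2) : ℝ)
        ≤ ∑' n : ℕ, a ^ 2 * x ^ 2 / 2 * (a * R / 3) ^ n := Summable.tsum_le_tsum hterm hsum2 hgeo
      _ = a ^ 2 * x ^ 2 / 2 * (1 - a * R / 3)⁻¹ := by
          rw [tsum_mul_left, tsum_geometric_of_lt_one hq0 hq1]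
      _ = a ^ 2 * x ^ 2 / (2 * (1 - a * R / 3)) := by
          rw [div_mul_eq_div_div]
          exact (div_eq_mul_inv _ _).symm
  have hexp : Real.exp (a * x) = ∑' n : ℕ, (a * x) ^ n / (Nat.factorial n : ℝ) := by
    rw [Real.exp_eq_exp_ℝ, NormedSpace.exp_eq_tsum_div]
  rw [hexp, Summable.tsum_eq_zero_add hsum, Summable.tsum_eq_zero_add ((summable_nat_add_iff 1).2 hsum)]
  simp only [pow_zero, Nat.factorial_zero, pow_one, Nat.factorial_one]
  norm_num
  linarith [htail]

lemma freedman_aux {Ω : Type*} {mΩ : MeasurableSpace Ω}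
    (μ : Measure Ω) [IsProbabilityMeasure μ]
    (ℱ : Filtration ℕ mΩ) (Y : ℕ → Ω → ℝ)
    (hY : Martingale Y ℱ μ) (hY0 : ∀ ω, Y 0 ω = 0)
    (R : ℝ) (hR : 0 < R)
    (hbdd : ∀ k : ℕ, 1 ≤ k → ∀ᵐ ω ∂μ, |Y k ω - Y (k - 1) ω| ≤ R)
    (t v : ℝ) (ht : 0 < t) (hv : 0 < v)
    (V : ℕ → Ω → ℝ)
    (hVdef : ∀ j, V j = μ[fun ω' => (Y j ω' - Y (j - 1) ω') ^ 2 | ℱ (j - 1)]) :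
    μ {ω | ∃ k : ℕ, t ≤ Y k ω ∧ (∑ j ∈ Finset.Icc 1 k, V j ω) ≤ v} ≤
      ENNReal.ofReal (Real.exp (-(t ^ 2) / (2 * (v + R * t / 3)))) := by
  classical
  set D : ℝ := v + R * t / 3 with hD_def
  have hD : 0 < D := by positivity
  set a : ℝ := t / D with ha_def
  have ha : 0 < a := by positivity
  have haR : a * R < 3 := by
    rw [ha_def, div_mul_eq_mul_div, div_lt_iff₀ hD]
    rw [hD_def]; nlinarith
  have h1q : 0 < 1 - a * R / 3 := by linarith
  set φ : ℝ := a ^ 2 / (2 * (1 - a * R / 3)) with hφ_def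
  have hφ : 0 ≤ φ := by positivity
  -- the key algebraic identity
  have hkey : a * t - φ * v = t ^ 2 / (2 * D) := by
    have h1q' : 1 - a * R / 3 = v / D := by
      rw [ha_def]; field_simp; rw [hD_def]; ring
    rw [hφ_def, h1q', ha_def]
    field_simp
    ring
  set c : ℝ := Real.exp (a * t - φ * v) with hc_def
  have hc : 0 < c := Real.exp_pos _
  -- the exponential supermartingale
  set W : ℕ → Ω → ℝ := fun k ω => ∑ j ∈ Finset.Icc 1 k, V j ω with hW_def
  set S : ℕ → Ω → ℝ := fun k ω => Real.exp (a * Y k ω - φ * W k ω) with hS_def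
  have hYint : ∀ k, Integrable (Y k) μ := hY.integrable
  have hVm : ∀ j, StronglyMeasurable[ℱ (j - 1)] (V j) := by
    intro j; rw [hVdef]; exact stronglyMeasurable_condExp
  have hVnn : ∀ j, 0 ≤ᵐ[μ] V j := by
    intro j; rw [hVdef]
    exact condExp_nonneg (ae_of_all _ fun ω => sq_nonneg _)
  have hWm : ∀ k m : ℕ, k ≤ m + 1 → StronglyMeasurable[ℱ m] (W k) := by
    intro k m hkm
    apply Finset.stronglyMeasurable_fun_sum
    intro j hj
    rw [Finset.mem_Icc] at hj
    exact (hVm j).mono (ℱ.mono (by omega))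
  have hWnn : ∀ᵐ ω ∂μ, ∀ k, 0 ≤ W k ω := by
    have := (ae_all_iff.2 hVnn)
    filter_upwards [this] with ω hω k
    exact Finset.sum_nonneg fun j _ => hω j
  have hSm : ∀ k, StronglyMeasurable[ℱ k] (S k) := by
    intro k
    exact Real.continuous_exp.comp_stronglyMeasurable
      (((hY.stronglyAdapted k).const_mul a).sub ((hWm k k (by omega)).const_mul φ))
  have haeY : ∀ k, ∀ᵐ ω ∂μ, |Y k ω| ≤ k * R := by
    intro k
    induction k with
    | zero => exact ae_of_all _ fun ω => by simp [hY0 ω]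
    | succ k ih =>
      filter_upwards [ih, hbdd (k + 1) (by omega)] with ω h1 h2
      have : Y (k+1) ω = (Y (k+1) ω - Y k ω) + Y k ω := by ring
      rw [this]
      calc |Y (k+1) ω - Y k ω + Y k ω| ≤ |Y (k+1) ω - Y k ω| + |Y k ω| := abs_add_le _ _
      _ ≤ R + k * R := by
          refine add_le_add ?_ h1
          simpa using h2
      _ = (k+1 : ℕ) * R := by push_cast; ring
  have hSbd : ∀ k, ∀ᵐ ω ∂μ, |S k ω| ≤ Real.exp (a * (k * R)) := by
    intro k
    filter_upwards [haeY k, hWnn] with ω h1 h2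
    rw [abs_of_pos (Real.exp_pos _), Real.exp_le_exp]
    have : Y k ω ≤ k * R := le_trans (le_abs_self _) h1
    nlinarith [h2 k, ha.le]
  have hSint : ∀ k, Integrable (S k) μ := by
    intro k
    refine (integrable_const (Real.exp (a * (k * R)))).mono'
      (((hSm k).mono (ℱ.le k)).aestronglyMeasurable) ?_
    simpa [Real.norm_eq_abs] using hSbd k
  -- supermartingale step
  have hstep : ∀ k, μ[S (k + 1) | ℱ k] ≤ᵐ[μ] S k := by
    intro k
    set X1 : Ω → ℝ := fun ω => Y (k+1) ω - Y k ω with hX1_def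
    have hX1ae : ∀ᵐ ω ∂μ, |X1 ω| ≤ R := hbdd (k+1) (by omega)
    have hX1int : Integrable X1 μ := (hYint (k+1)).sub (hYint k)
    set sq1 : Ω → ℝ := fun ω => X1 ω ^ 2 with hsq1_def
    have hsq1m : AEStronglyMeasurable sq1 μ :=
      ((hX1int.aestronglyMeasurable).pow 2)
    have hsq1int : Integrable sq1 μ := by
      refine (integrable_const (R ^ 2)).mono' hsq1m ?_
      filter_upwards [hX1ae] with ω h
      rw [Real.norm_eq_abs, abs_of_nonneg (sq_nonneg _)]
      calc X1 ω ^ 2 = |X1 ω| ^ 2 := (sq_abs _).symm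
      _ ≤ R ^ 2 := pow_le_pow_left₀ (abs_nonneg _) h 2
    set E : Ω → ℝ := fun ω => Real.exp (a * X1 ω) with hE_def
    have hEm : AEStronglyMeasurable E μ :=
      (Real.continuous_exp.comp_aestronglyMeasurable
        (hX1int.aestronglyMeasurable.const_smul a))
    have hEint : Integrable E μ := by
      refine (integrable_const (Real.exp (a * R))).mono' hEm ?_
      filter_upwards [hX1ae] with ω h
      rw [Real.norm_eq_abs, abs_of_pos (Real.exp_pos _), Real.exp_le_exp]
      have := le_trans (le_abs_self _) h
      nlinarith [ha.le]
    set G : Ω → ℝ := fun ω => Real.exp (a * Y k ω - φ * W (k+1) ω) with hG_def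
    have hGm : StronglyMeasurable[ℱ k] G :=
      Real.continuous_exp.comp_stronglyMeasurable
        (((hY.stronglyAdapted k).const_mul a).sub ((hWm (k+1) k (by omega)).const_mul φ))
    have hGE : S (k+1) = G * E := by
      funext ω
      simp only [hS_def, hG_def, hE_def, hX1_def, Pi.mul_apply, ← Real.exp_add]
      congr 1
      ring
    have hGEint : Integrable (G * E) μ := by
      rw [← hGE]; exact hSint (k+1)
    have hpull : μ[G * E | ℱ k] =ᵐ[μ] G * μ[E | ℱ k] :=
      condExp_mul_of_stronglyMeasurable_left hGm hGEint hEint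
    -- bound the conditional expectation of E
    set P : Ω → ℝ := (fun _ => (1:ℝ)) + (a • X1 + φ • sq1) with hP_def
    have hPint : Integrable P μ :=
      (integrable_const 1).add ((hX1int.smul a).add (hsq1int.smul φ))
    have hEP : E ≤ᵐ[μ] P := by
      filter_upwards [hX1ae] with ω h
      have := freedman_exp_bound ha.le hR haR h
      have h2 : φ * X1 ω ^ 2 = a ^ 2 * X1 ω ^ 2 / (2 * (1 - a * R / 3)) := by
        rw [hφ_def]; ring
      simp only [hP_def, hE_def, hsq1_def, Pi.add_apply, Pi.smul_apply, smul_eq_mul, h2]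
      linarith [this]
    have hVsucc : V (k+1) = μ[sq1 | ℱ k] := by
      rw [hVdef (k+1)]
      rfl
    have hcondX1 : μ[X1 | ℱ k] =ᵐ[μ] fun _ => (0:ℝ) := by
      have h1 : μ[X1 | ℱ k] =ᵐ[μ] μ[Y (k+1) | ℱ k] - μ[Y k | ℱ k] :=
        condExp_sub (hYint (k+1)) (hYint k) _
      have h2 := hY.condExp_ae_eq (Nat.le_succ k)
      have h3 : μ[Y k | ℱ k] = Y k :=
        condExp_of_stronglyMeasurable (ℱ.le k) (hY.stronglyAdapted k) (hYint k)
      filter_upwards [h1, h2] with ω e1 e2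
      rw [e1, Pi.sub_apply, e2, h3, sub_self]
    have hlin : μ[P | ℱ k] =ᵐ[μ] fun ω => 1 + φ * V (k+1) ω := by
      have h1 : μ[P | ℱ k] =ᵐ[μ] μ[fun _ => (1:ℝ) | ℱ k] + μ[a • X1 + φ • sq1 | ℱ k] :=
        condExp_add (integrable_const 1) ((hX1int.smul a).add (hsq1int.smul φ)) _
      have h2 : μ[a • X1 + φ • sq1 | ℱ k] =ᵐ[μ] μ[a • X1 | ℱ k] + μ[φ • sq1 | ℱ k] :=
        condExp_add (hX1int.smul a) (hsq1int.smul φ) _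
      have h3 : μ[a • X1 | ℱ k] =ᵐ[μ] a • μ[X1 | ℱ k] := condExp_smul a X1 _
      have h4 : μ[φ • sq1 | ℱ k] =ᵐ[μ] φ • μ[sq1 | ℱ k] := condExp_smul φ sq1 _
      have h5 : μ[fun _ => (1:ℝ) | ℱ k] = fun _ => (1:ℝ) := condExp_const (ℱ.le k) 1
      filter_upwards [h1, h2, h3, h4, hcondX1] with ω e1 e2 e3 e4 e5
      simp only [e1, Pi.add_apply, e2, e3, e4, h5, Pi.smul_apply, e5, smul_eq_mul, hVsucc]
      ring
    have hWsucc : ∀ ω, W (k+1) ω = W k ω + V (k+1) ω := by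
      intro ω
      rw [hW_def]
      exact Finset.sum_Icc_succ_top (by omega) _
    have hcond : μ[S (k+1) | ℱ k] =ᵐ[μ] G * μ[E | ℱ k] := by
      calc μ[S (k+1) | ℱ k] = μ[G * E | ℱ k] := by rw [hGE]
      _ =ᵐ[μ] G * μ[E | ℱ k] := hpull
    refine hcond.trans_le ?_
    have hmono : μ[E | ℱ k] ≤ᵐ[μ] μ[P | ℱ k] := condExp_mono hEint hPint hEP
    filter_upwards [hmono, hlin] with ω e1 e2
    have hG0 : 0 ≤ G ω := (Real.exp_pos _).le
    calc G ω * (μ[E | ℱ k]) ω ≤ G ω * (1 + φ * V (k+1) ω) := by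
          rw [← e2]; exact mul_le_mul_of_nonneg_left e1 hG0
    _ ≤ G ω * Real.exp (φ * V (k+1) ω) := by
          refine mul_le_mul_of_nonneg_left ?_ hG0
          have := Real.add_one_le_exp (φ * V (k+1) ω)
          linarith
    _ = S k ω := by
          rw [hG_def, hS_def, ← Real.exp_add]
          congr 1
          rw [hWsucc ω]
          ring
  have hSsuper : Supermartingale S ℱ μ :=
    supermartingale_nat (fun k => hSm k) hSint hstep
  -- the stopped process bound
  have hBn : ∀ n : ℕ, μ {ω | ∃ k ≤ n, c ≤ S k ω} ≤ ENNReal.ofReal (1 / c) := by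
    intro n
    set Bn : Set Ω := {ω | ∃ k ≤ n, c ≤ S k ω} with hBn_def
    have hBmeas : MeasurableSet Bn := by
      have : Bn = ⋃ k ∈ Finset.range (n+1), {ω | c ≤ S k ω} := by
        ext ω
        simp only [hBn_def, Set.mem_setOf_eq, Set.mem_iUnion, Finset.mem_range]
        constructor
        · rintro ⟨k, hk, h⟩; exact ⟨k, by omega, h⟩
        · rintro ⟨k, hk, h⟩; exact ⟨k, by omega, h⟩
      rw [this]
      exact Finset.measurableSet_biUnion _ fun k _ =>
        measurableSet_le measurable_const ((hSm k).mono (ℱ.le k)).measurable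
    set τ : Ω → ℕ∞ := fun ω => (hittingBtwn S (Set.Ici c) 0 n ω : ℕ) with hτ_def
    have hτ : IsStoppingTime ℱ τ := hSsuper.stronglyAdapted.adapted.isStoppingTime_hittingBtwn measurableSet_Ici
    have hτle : ∀ ω, τ ω ≤ n := fun ω => by
      simp only [hτ_def]; exact_mod_cast (hittingBtwn_le (u := S) (s := Set.Ici c) (n := 0) ω)
    have hsvint : Integrable (stoppedValue S τ) μ :=
      integrable_stoppedValue ℕ hτ hSint hτle
    have hkey2 : ∫ ω, stoppedValue S τ ω ∂μ ≤ 1 := by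
      have hmono := (hSsuper.neg).expected_stoppedValue_mono
        (isStoppingTime_const ℱ 0) hτ (fun ω => by rw [WithTop.coe_zero]; exact (zero_le : (0:ℕ∞) ≤ τ ω)) hτle
      have hS0 : S 0 = fun _ => (1:ℝ) := by
        funext ω
        rw [hS_def, hW_def]
        simp [hY0 ω, Finset.Icc_eq_empty (by omega : ¬ (1:ℕ) ≤ 0)]
      have e1 : stoppedValue (-S) (fun _ => ((0:ℕ) : WithTop ℕ)) = fun _ => (-1 : ℝ) := by
        funext ω
        simp [stoppedValue, hS0]
      have e2 : stoppedValue (-S) τ = -(stoppedValue S τ) := by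
        funext ω
        simp [stoppedValue]
      simp only [stoppedValue_const, e2, Pi.neg_apply, hS0] at hmono
      simp only [Pi.neg_apply, integral_neg, integral_const, measure_univ, ENNReal.toReal_one, probReal_univ,
        smul_eq_mul, one_mul] at hmono
      linarith
    have hlow : c * (μ Bn).toReal ≤ ∫ ω, stoppedValue S τ ω ∂μ := by
      have h1 : c * (μ Bn).toReal ≤ ∫ ω in Bn, stoppedValue S τ ω ∂μ := by
        refine le_trans (le_of_eq ?_)
          (setIntegral_ge_of_const_le (c := c) hBmeas (measure_ne_top μ _) ?_ hsvint.integrableOn)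
        · rw [smul_eq_mul, mul_comm]; rfl
        rintro ω ⟨k, hk, hc'⟩
        have : S (hittingBtwn S (Set.Ici c) 0 n ω) ω ∈ Set.Ici c :=
          hittingBtwn_mem_set ⟨k, ⟨Nat.zero_le _, hk⟩, hc'⟩
        exact this
      refine h1.trans ?_
      exact setIntegral_le_integral hsvint (ae_of_all _ fun ω => (Real.exp_pos _).le)
    have : c * (μ Bn).toReal ≤ 1 := hlow.trans hkey2
    have htoReal : (μ Bn).toReal ≤ 1 / c := by
      rw [le_div_iff₀ hc]; linarith
    calc μ Bn = ENNReal.ofReal ((μ Bn).toReal) := (ENNReal.ofReal_toReal (measure_ne_top μ _)).symm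
    _ ≤ ENNReal.ofReal (1 / c) := ENNReal.ofReal_le_ofReal htoReal
  -- combine
  have hsub : {ω | ∃ k : ℕ, t ≤ Y k ω ∧ (∑ j ∈ Finset.Icc 1 k, V j ω) ≤ v} ⊆
      ⋃ n : ℕ, {ω | ∃ k ≤ n, c ≤ S k ω} := by
    rintro ω ⟨k, h1, h2⟩
    refine Set.mem_iUnion.2 ⟨k, k, le_rfl, ?_⟩
    rw [hc_def, hS_def, Real.exp_le_exp]
    have e1 : a * t ≤ a * Y k ω := mul_le_mul_of_nonneg_left h1 ha.le
    have e2 : φ * W k ω ≤ φ * v := mul_le_mul_of_nonneg_left h2 hφ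
    linarith
  have hmonoB : Monotone (fun n : ℕ => {ω | ∃ k ≤ n, c ≤ S k ω}) := by
    intro m n hmn ω
    rintro ⟨k, hk, h⟩
    exact ⟨k, hk.trans hmn, h⟩
  calc μ {ω | ∃ k : ℕ, t ≤ Y k ω ∧ (∑ j ∈ Finset.Icc 1 k, V j ω) ≤ v}
      ≤ μ (⋃ n : ℕ, {ω | ∃ k ≤ n, c ≤ S k ω}) := measure_mono hsub
  _ = ⨆ n, μ {ω | ∃ k ≤ n, c ≤ S k ω} := hmonoB.directed_le.measure_iUnion
  _ ≤ ENNReal.ofReal (1 / c) := iSup_le hBn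
  _ = ENNReal.ofReal (Real.exp (-(t ^ 2) / (2 * (v + R * t / 3)))) := by
      congr 1
      rw [hc_def, one_div, ← Real.exp_neg, hkey, neg_div]

/-- Freedman's inequality: for a martingale (Y_k) with Y_0 = 0 whose difference
sequence X_k = Y_k − Y_{k−1} is uniformly bounded by R almost surely, and predictable
quadratic variation W_k = Σ_{j=1}^k E[X_j² | Σ_{j−1}],
P(∃ k, Y_k ≥ t and W_k ≤ s²) ≤ exp(−t²/(2(s² + R·t/3))). -/
theorem freedman_inequality {Ω : Type*} {mΩ : MeasurableSpace Ω}
    (μ : Measure Ω) [IsProbabilityMeasure μ]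
    (ℱ : Filtration ℕ mΩ) (Y : ℕ → Ω → ℝ)
    (hY : Martingale Y ℱ μ) (hY0 : ∀ ω, Y 0 ω = 0)
    (R : ℝ)
    (hbdd : ∀ k : ℕ, 1 ≤ k → ∀ᵐ ω ∂μ, |Y k ω - Y (k - 1) ω| ≤ R)
    (t v : ℝ) (ht : 0 ≤ t) (hv : 0 < v) :
    μ {ω | ∃ k : ℕ,
        t ≤ Y k ω ∧
        (∑ j ∈ Finset.Icc 1 k,
            (μ[fun ω' => (Y j ω' - Y (j - 1) ω') ^ 2 | ℱ (j - 1)]) ω) ≤ v} ≤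
      ENNReal.ofReal (Real.exp (-(t ^ 2) / (2 * (v + R * t / 3)))) := by
  rcases eq_or_lt_of_le ht with h0 | ht'
  · have he : (-(t ^ 2)) / (2 * (v + R * t / 3)) = 0 := by
      rw [← h0]; norm_num
    rw [he, Real.exp_zero, ENNReal.ofReal_one]
    exact prob_le_one
  · rcases le_or_gt R 0 with hR | hR
    · have hae : ∀ k, ∀ᵐ ω ∂μ, Y k ω = 0 := by
        intro k
        induction k with
        | zero => exact ae_of_all _ fun ω => hY0 ω
        | succ k ih =>
          filter_upwards [ih, hbdd (k+1) (by omega)] with ω h1 h2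
          have h2' : |Y (k+1) ω - Y k ω| ≤ 0 := by
            refine le_trans ?_ hR
            simpa using h2
          have h3 : Y (k+1) ω - Y k ω = 0 :=
            abs_eq_zero.1 (le_antisymm h2' (abs_nonneg _))
          linarith
      have hnull : μ {ω | ∃ k : ℕ,
          t ≤ Y k ω ∧
          (∑ j ∈ Finset.Icc 1 k,
              (μ[fun ω' => (Y j ω' - Y (j - 1) ω') ^ 2 | ℱ (j - 1)]) ω) ≤ v} = 0 := by
        have hU : μ (⋃ k : ℕ, {ω | t ≤ Y k ω}) = 0 := by
          refine measure_iUnion_null fun k => ?_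
          refine measure_mono_null (fun ω (hω : t ≤ Y k ω) => ?_) ((ae_iff).1 (hae k))
          simp only [Set.mem_setOf_eq]
          intro heq
          rw [heq] at hω
          exact absurd hω (not_le.2 ht')
        refine measure_mono_null (fun ω hω => ?_) hU
        obtain ⟨k, h1, _⟩ := hω
        exact Set.mem_iUnion.2 ⟨k, h1⟩
      rw [hnull]
      exact zero_le
    · exact freedman_aux μ ℱ Y hY hY0 R hR hbdd t v ht' hv
        (fun j => μ[fun ω' => (Y j ω' - Y (j - 1) ω') ^ 2 | ℱ (j - 1)]) (fun j => rfl)
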